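/- Let d_s, m, n ∈ ℕ with n ≥ 1 and write points of (Fin n → EuclideanSpace ℝ (Fin d_s)) × EuclideanSpace ℝ (Fin m) as w = (θ₁,…,θₙ, η). Let L_S : EuclideanSpace ℝ (Fin d_s) → ℝ be twice continuously differentiable and define L₁(w) = (1/n)·∑_{i=1}^n L_S(θᵢ), with F = −gradient L₁. Let L₂ be twice continuously differentiable with G = −gradient L₂, and suppose that for every w the partial gradient of L₂ with respect to each block θᵢ equals the partial gradient of L₁ with respect to θᵢ (so G − F has nonzero component only in the η-direction, equal to −∇_η L₂). Then at every diagonal point w₀ = (θ,…,θ, 0): the Lie bracket [F,G](w₀) = (fderiv ℝ G w₀)(F(w₀)) − (fderiv ℝ F w₀)(G(w₀)) has zero component in every θᵢ-block, and its η-component equals (1/n)·∑_{i=1}^n (the derivative in the θᵢ-direction of the map w ↦ ∇_η L₂(w), evaluated at w₀, applied to gradient L_S θ). -/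

import Mathlib

noncomputable section

/-- The parameter space of the big model obtained by self deep fusing a small model
with parameters in `ℝ^{d_s}` `n` times, with extra parameters `η ∈ ℝ^m`:
points `w = (θ₁,…,θₙ,η)`. -/
abbrev Wsp (d_s m n : ℕ) := EuclideanSpace ℝ ((Fin n × Fin d_s) ⊕ Fin m)

/-- The `i`-th parameter block `θᵢ` of a point `w = (θ₁,…,θₙ,η)`. -/
def blk {d_s m n : ℕ} (w : Wsp d_s m n) (i : Fin n) : EuclideanSpace ℝ (Fin d_s) :=
  WithLp.toLp 2 (fun a => w (Sum.inl (i, a)) : Fin d_s → ℝ)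

/-- The `η`-component of a point `w = (θ₁,…,θₙ,η)`. -/
def etaOf {d_s m n : ℕ} (w : Wsp d_s m n) : EuclideanSpace ℝ (Fin m) :=
  WithLp.toLp 2 (fun b => w (Sum.inr b) : Fin m → ℝ)

/-- Replace the `i`-th block of `w` by `θ'`, keeping all other components. -/
def updBlk {d_s m n : ℕ} (w : Wsp d_s m n) (i : Fin n)
    (θ' : EuclideanSpace ℝ (Fin d_s)) : Wsp d_s m n :=
  WithLp.toLp 2 (fun z => Sum.elim (fun p : Fin n × Fin d_s => if p.1 = i then θ' p.2 else w (Sum.inl p))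
    (fun b => w (Sum.inr b)) z : ((Fin n × Fin d_s) ⊕ Fin m) → ℝ)

/-- Replace the `η`-component of `w` by `η'`, keeping the blocks. -/
def updEta {d_s m n : ℕ} (w : Wsp d_s m n) (η' : EuclideanSpace ℝ (Fin m)) :
    Wsp d_s m n :=
  WithLp.toLp 2 (fun z => Sum.elim (fun p : Fin n × Fin d_s => w (Sum.inl p)) (fun b => η' b) z :
    ((Fin n × Fin d_s) ⊕ Fin m) → ℝ)

/-- The tangent vector placing `v` in the `i`-th block (the `θᵢ`-direction). -/
def embedBlk {d_s m n : ℕ} (i : Fin n) (v : EuclideanSpace ℝ (Fin d_s)) :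
    Wsp d_s m n :=
  WithLp.toLp 2 (fun z => Sum.elim (fun p : Fin n × Fin d_s => if p.1 = i then v p.2 else 0)
    (fun _ => (0 : ℝ)) z : ((Fin n × Fin d_s) ⊕ Fin m) → ℝ)

/-- The diagonal point `(θ,…,θ,0)`. -/
def diagPt {d_s m n : ℕ} (θ : EuclideanSpace ℝ (Fin d_s)) : Wsp d_s m n :=
  WithLp.toLp 2 (fun z => Sum.elim (fun p : Fin n × Fin d_s => θ p.2) (fun _ => (0 : ℝ)) z :
    ((Fin n × Fin d_s) ⊕ Fin m) → ℝ)

/-! ### Auxiliary lemmas -/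

open InnerProductSpace

lemma grad_apply' {ι : Type*} [Fintype ι] [DecidableEq ι] (f : EuclideanSpace ℝ ι → ℝ)
    (x : EuclideanSpace ℝ ι) (z : ι) :
    gradient f x z = fderiv ℝ f x (EuclideanSpace.single z 1) := by
  have h : (inner ℝ (gradient f x) (EuclideanSpace.single z (1:ℝ)) : ℝ)
      = fderiv ℝ f x (EuclideanSpace.single z 1) := toDual_symm_apply
  rw [EuclideanSpace.inner_single_right] at h
  simpa using h

lemma Wsp_sum_apply {ι : Type*} [Fintype ι] {κ : Type*} (s : Finset κ)
    (f : κ → EuclideanSpace ℝ ι) (z : ι) :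
    (∑ i ∈ s, f i) z = ∑ i ∈ s, f i z := by
  induction s using Finset.cons_induction with
  | empty => rfl
  | cons a s ha ih => rw [Finset.sum_cons, Finset.sum_cons, PiLp.add_apply, ih]

section maps
variable {d_s m n : ℕ}

def BiL (d_s m n : ℕ) (i : Fin n) : Wsp d_s m n →L[ℝ] EuclideanSpace ℝ (Fin d_s) :=
  LinearMap.toContinuousLinearMap
    { toFun := fun w => blk w i
      map_add' := fun _ _ => rfl
      map_smul' := fun _ _ => rfl }

def JblkL (d_s m n : ℕ) (i : Fin n) : EuclideanSpace ℝ (Fin d_s) →L[ℝ] Wsp d_s m n :=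
  LinearMap.toContinuousLinearMap
    { toFun := fun v => embedBlk i v
      map_add' := fun x y => by
        ext z
        cases z with
        | inl p => show (if p.1 = i then (x + y) p.2 else 0) = _
                   by_cases h : p.1 = i <;> simp [embedBlk, h, PiLp.add_apply]
        | inr b => show (0:ℝ) = 0 + 0; simp
      map_smul' := fun c x => by
        ext z
        cases z with
        | inl p => show (if p.1 = i then (c • x) p.2 else 0) = _
                   by_cases h : p.1 = i <;> simp [embedBlk, h, PiLp.smul_apply]
        | inr b => show (0:ℝ) = c • 0; simp }

def JetaL (d_s m n : ℕ) : EuclideanSpace ℝ (Fin m) →L[ℝ] Wsp d_s m n :=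
  LinearMap.toContinuousLinearMap
    { toFun := fun η => WithLp.toLp 2 (fun z => Sum.elim (fun _ => (0:ℝ)) (fun b => η b) z :
        ((Fin n × Fin d_s) ⊕ Fin m) → ℝ)
      map_add' := fun x y => by
        ext z; cases z with
        | inl p => show (0:ℝ) = 0 + 0; simp
        | inr b => rfl
      map_smul' := fun c x => by
        ext z; cases z with
        | inl p => show (0:ℝ) = c • 0; simp
        | inr b => rfl }

def rhoL (d_s m n : ℕ) : Wsp d_s m n →L[ℝ] Wsp d_s m n :=
  LinearMap.toContinuousLinearMap
    { toFun := fun w => updEta w 0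
      map_add' := fun x y => by
        ext z; cases z with
        | inl p => rfl
        | inr b => show (0:ℝ) = 0 + 0; simp
      map_smul' := fun c x => by
        ext z; cases z with
        | inl p => rfl
        | inr b => show (0:ℝ) = c • 0; simp }

def petaL (d_s m n : ℕ) : Wsp d_s m n →L[ℝ] EuclideanSpace ℝ (Fin m) :=
  LinearMap.toContinuousLinearMap
    { toFun := fun w => etaOf w
      map_add' := fun _ _ => rfl
      map_smul' := fun _ _ => rfl }

lemma updBlk_eq_const_add (w : Wsp d_s m n) (i : Fin n) (θ' : EuclideanSpace ℝ (Fin d_s)) :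
    updBlk w i θ' = updBlk w i 0 + JblkL d_s m n i θ' := by
  ext z
  cases z with
  | inl p =>
      show _ = (updBlk w i 0 + _) (Sum.inl p)
      rw [PiLp.add_apply]
      by_cases h : p.1 = i <;> simp [updBlk, embedBlk, JblkL, LinearMap.toContinuousLinearMap, h]
  | inr b =>
      show _ = (updBlk w i 0 + _) (Sum.inr b)
      rw [PiLp.add_apply]
      simp [updBlk, embedBlk, JblkL, LinearMap.toContinuousLinearMap]

lemma updBlk_self (w : Wsp d_s m n) (i : Fin n) : updBlk w i (blk w i) = w := by
  ext z
  cases z with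
  | inl p => show (if p.1 = i then w (Sum.inl (i, p.2)) else w (Sum.inl p)) = w (Sum.inl p)
             by_cases h : p.1 = i
             · subst h; simp
             · simp [h]
  | inr b => rfl

lemma fderiv_updBlk (f : Wsp d_s m n → ℝ) (w : Wsp d_s m n) (i : Fin n)
    (hf : DifferentiableAt ℝ f w) :
    fderiv ℝ (fun θ' => f (updBlk w i θ')) (blk w i)
      = (fderiv ℝ f w).comp (JblkL d_s m n i) := by
  have h2 : HasFDerivAt (fun θ' => updBlk w i θ') (JblkL d_s m n i) (blk w i) := by
    have := (JblkL d_s m n i).hasFDerivAt (x := blk w i) |>.const_add (updBlk w i 0)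
    simpa [← updBlk_eq_const_add] using this
  have h3 : HasFDerivAt f (fderiv ℝ f w) (updBlk w i (blk w i)) := by
    rw [updBlk_self]; exact hf.hasFDerivAt
  exact (h3.comp (blk w i) h2).fderiv

lemma Jblk_single (i : Fin n) (a : Fin d_s) :
    JblkL d_s m n i (EuclideanSpace.single a 1)
      = EuclideanSpace.single (Sum.inl (i, a) : (Fin n × Fin d_s) ⊕ Fin m) 1 := by
  ext z
  cases z with
  | inl p =>
      show (if p.1 = i then EuclideanSpace.single a 1 p.2 else 0) = _
      rw [EuclideanSpace.single_apply, EuclideanSpace.single_apply]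
      by_cases h1 : p.1 = i <;> by_cases h2 : p.2 = a
      · simp [h1, h2, Prod.ext_iff]
      · simp [h1, h2, Prod.ext_iff]
      · simp [h1, h2, Prod.ext_iff]
      · simp [h1, h2, Prod.ext_iff]
  | inr b =>
      show (0:ℝ) = _
      rw [EuclideanSpace.single_apply]
      simp

lemma gradBlk (f : Wsp d_s m n → ℝ) (w : Wsp d_s m n) (i : Fin n)
    (hf : DifferentiableAt ℝ f w) (a : Fin d_s) :
    gradient (fun θ' => f (updBlk w i θ')) (blk w i) a
      = gradient f w (Sum.inl (i, a)) := by
  rw [grad_apply', grad_apply', fderiv_updBlk f w i hf]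
  rw [ContinuousLinearMap.comp_apply, Jblk_single]

lemma updEta_eq_const_add (w : Wsp d_s m n) (η' : EuclideanSpace ℝ (Fin m)) :
    updEta w η' = updEta w 0 + JetaL d_s m n η' := by
  ext z
  cases z with
  | inl p =>
      show _ = (updEta w 0 + _) (Sum.inl p)
      rw [PiLp.add_apply]
      simp [updEta, JetaL, LinearMap.toContinuousLinearMap]
  | inr b =>
      show _ = (updEta w 0 + _) (Sum.inr b)
      rw [PiLp.add_apply]
      simp [updEta, JetaL, LinearMap.toContinuousLinearMap]

lemma updEta_self (w : Wsp d_s m n) : updEta w (etaOf w) = w := by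
  ext z
  cases z with
  | inl p => rfl
  | inr b => rfl

lemma fderiv_updEta (f : Wsp d_s m n → ℝ) (w : Wsp d_s m n)
    (hf : DifferentiableAt ℝ f w) :
    fderiv ℝ (fun η' => f (updEta w η')) (etaOf w)
      = (fderiv ℝ f w).comp (JetaL d_s m n) := by
  have h2 : HasFDerivAt (fun η' => updEta w η') (JetaL d_s m n) (etaOf w) := by
    have := (JetaL d_s m n).hasFDerivAt (x := etaOf w) |>.const_add (updEta w 0)
    simpa [← updEta_eq_const_add] using this
  have h3 : HasFDerivAt f (fderiv ℝ f w) (updEta w (etaOf w)) := by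
    rw [updEta_self]; exact hf.hasFDerivAt
  exact (h3.comp (etaOf w) h2).fderiv

lemma Jeta_single (b : Fin m) :
    JetaL d_s m n (EuclideanSpace.single b 1)
      = EuclideanSpace.single (Sum.inr b : (Fin n × Fin d_s) ⊕ Fin m) 1 := by
  ext z
  cases z with
  | inl p =>
      show (0:ℝ) = _
      rw [EuclideanSpace.single_apply]; simp
  | inr b' =>
      show EuclideanSpace.single b 1 b' = _
      rw [EuclideanSpace.single_apply, EuclideanSpace.single_apply]
      by_cases h : b' = b <;> simp [h]

lemma gradEta (f : Wsp d_s m n → ℝ) (w : Wsp d_s m n)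
    (hf : DifferentiableAt ℝ f w) (b : Fin m) :
    gradient (fun η' => f (updEta w η')) (etaOf w) b
      = gradient f w (Sum.inr b) := by
  rw [grad_apply', grad_apply', fderiv_updEta f w hf]
  rw [ContinuousLinearMap.comp_apply, Jeta_single]

lemma fderiv_L1 (L_S : EuclideanSpace ℝ (Fin d_s) → ℝ) (hLS : ContDiff ℝ 2 L_S)
    (w v : Wsp d_s m n) :
    fderiv ℝ (fun w => (1 / (n : ℝ)) * ∑ i : Fin n, L_S (blk w i)) w v
      = (1 / (n : ℝ)) * ∑ i : Fin n, fderiv ℝ L_S (blk w i) (blk v i) := by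
  have hLSd : Differentiable ℝ L_S := hLS.differentiable two_ne_zero
  have hdiff : ∀ i : Fin n, DifferentiableAt ℝ (fun w : Wsp d_s m n => L_S (blk w i)) w :=
    fun i => (hLSd (blk w i)).comp w (BiL d_s m n i).differentiableAt
  rw [fderiv_const_mul (DifferentiableAt.fun_sum fun i _ => hdiff i)]
  rw [fderiv_fun_sum fun i _ => hdiff i]
  have hcomp : ∀ i : Fin n, fderiv ℝ (fun w : Wsp d_s m n => L_S (blk w i)) w
      = (fderiv ℝ L_S (blk w i)).comp (BiL d_s m n i) := by
    intro i
    exact ((hLSd (blk w i)).hasFDerivAt.comp w (BiL d_s m n i).hasFDerivAt).fderiv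
  simp only [ContinuousLinearMap.smul_apply, ContinuousLinearMap.coe_sum',
    Finset.sum_apply, hcomp, ContinuousLinearMap.comp_apply, smul_eq_mul]
  rfl

lemma blk_single_inl (j : Fin n) (a : Fin d_s) (i : Fin n) :
    blk (EuclideanSpace.single (Sum.inl (j, a) : (Fin n × Fin d_s) ⊕ Fin m) 1) i
      = if i = j then EuclideanSpace.single a 1 else 0 := by
  ext a'
  by_cases h : i = j
  · subst h
    show EuclideanSpace.single _ 1 (Sum.inl (i, a')) = _
    rw [EuclideanSpace.single_apply]
    simp [EuclideanSpace.single_apply, Prod.ext_iff]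
  · show EuclideanSpace.single _ 1 (Sum.inl (i, a')) = _
    rw [EuclideanSpace.single_apply]
    simp [h, Prod.ext_iff]

lemma blk_single_inr (b : Fin m) (i : Fin n) :
    blk (EuclideanSpace.single (Sum.inr b : (Fin n × Fin d_s) ⊕ Fin m) 1) i = 0 := by
  ext a'
  show EuclideanSpace.single (Sum.inr b : (Fin n × Fin d_s) ⊕ Fin m) (1:ℝ) (Sum.inl (i, a')) = _
  rw [EuclideanSpace.single_apply]
  simp

lemma grad_L1_inl (L_S : EuclideanSpace ℝ (Fin d_s) → ℝ) (hLS : ContDiff ℝ 2 L_S)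
    (w : Wsp d_s m n) (j : Fin n) (a : Fin d_s) :
    gradient (fun w : Wsp d_s m n => (1 / (n : ℝ)) * ∑ i : Fin n, L_S (blk w i)) w
        (Sum.inl (j, a))
      = (1 / (n : ℝ)) * gradient L_S (blk w j) a := by
  rw [grad_apply', fderiv_L1 L_S hLS, grad_apply']
  congr 1
  rw [Finset.sum_eq_single j]
  · rw [blk_single_inl]; simp
  · intro i _ hij
    rw [blk_single_inl]
    simp [hij]
  · simp

lemma grad_L1_inr (L_S : EuclideanSpace ℝ (Fin d_s) → ℝ) (hLS : ContDiff ℝ 2 L_S)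
    (w : Wsp d_s m n) (b : Fin m) :
    gradient (fun w : Wsp d_s m n => (1 / (n : ℝ)) * ∑ i : Fin n, L_S (blk w i)) w
        (Sum.inr b) = 0 := by
  rw [grad_apply', fderiv_L1 L_S hLS]
  simp [blk_single_inr]

lemma contDiff_gradient' {ι : Type*} [Fintype ι] (f : EuclideanSpace ℝ ι → ℝ)
    (hf : ContDiff ℝ 2 f) : ContDiff ℝ 1 (gradient f) := by
  have h : ContDiff ℝ 1 (fderiv ℝ f) := hf.fderiv_right (by norm_num)
  have heq : gradient f = fun x => (toDual ℝ (EuclideanSpace ℝ ι)).symm (fderiv ℝ f x) := rfl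
  rw [heq]
  exact (toDual ℝ (EuclideanSpace ℝ ι)).symm.contDiff.comp h

end maps

/-- **Non-zero Lie bracket lemma.** With `L₁(w) = (1/n)∑ᵢ L_S(θᵢ)`, `F = −∇L₁`,
`G = −∇L₂`, and the block partial gradients of `L₂` and `L₁` agreeing everywhere, at
every diagonal point `w₀ = (θ,…,θ,0)` the Lie bracket
`[F,G](w₀) = (∇G(w₀))(F(w₀)) − (∇F(w₀))(G(w₀))` vanishes in every `θᵢ`-block, and its
`η`-component is `(1/n)∑ᵢ (∇_{θᵢ}(∇_η L₂))(w₀)(∇L_S(θ))`. -/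
theorem stmt_15 (d_s m n : ℕ) (hn : 1 ≤ n)
    (L_S : EuclideanSpace ℝ (Fin d_s) → ℝ) (hLS : ContDiff ℝ 2 L_S)
    (L₁ : Wsp d_s m n → ℝ)
    (hL₁ : L₁ = fun w => (1 / (n : ℝ)) * ∑ i : Fin n, L_S (blk w i))
    (L₂ : Wsp d_s m n → ℝ) (hL₂ : ContDiff ℝ 2 L₂)
    (F G : Wsp d_s m n → Wsp d_s m n)
    (hF : F = fun w => -gradient L₁ w) (hG : G = fun w => -gradient L₂ w)
    (hpart : ∀ (w : Wsp d_s m n) (i : Fin n),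
      gradient (fun θ' => L₂ (updBlk w i θ')) (blk w i)
        = gradient (fun θ' => L₁ (updBlk w i θ')) (blk w i))
    (θ : EuclideanSpace ℝ (Fin d_s)) :
    (∀ (i : Fin n) (a : Fin d_s),
        (fderiv ℝ G (diagPt θ) (F (diagPt θ))
          - fderiv ℝ F (diagPt θ) (G (diagPt θ))) (Sum.inl (i, a)) = 0)
    ∧ ((fun bc => (fderiv ℝ G (diagPt θ) (F (diagPt θ))
          - fderiv ℝ F (diagPt θ) (G (diagPt θ))) (Sum.inr bc) : Fin m → ℝ)
        = ((1 / (n : ℝ)) • ∑ i : Fin n,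
            fderiv ℝ (fun w => gradient (fun η' => L₂ (updEta w η')) (etaOf w))
              (diagPt θ) (embedBlk i (gradient L_S θ)) : EuclideanSpace ℝ (Fin m))) := by
  subst hL₁
  set L₁ : Wsp d_s m n → ℝ := fun w => (1 / (n : ℝ)) * ∑ i : Fin n, L_S (blk w i) with hL₁def
  have hL₁c : ContDiff ℝ 2 L₁ := by
    exact contDiff_const.mul (ContDiff.sum fun i _ => hLS.comp (BiL d_s m n i).contDiff)
  have hL₁d : Differentiable ℝ L₁ := hL₁c.differentiable two_ne_zero
  have hL₂d : Differentiable ℝ L₂ := hL₂.differentiable two_ne_zero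
  have hgradL₁ : ContDiff ℝ 1 (gradient L₁) := contDiff_gradient' L₁ hL₁c
  have hgradL₂ : ContDiff ℝ 1 (gradient L₂) := contDiff_gradient' L₂ hL₂
  have hFd : Differentiable ℝ F := by
    rw [hF]; exact (hgradL₁.differentiable one_ne_zero).neg
  set P : Wsp d_s m n → EuclideanSpace ℝ (Fin m) :=
    fun w => gradient (fun η' => L₂ (updEta w η')) (etaOf w) with hPdef
  have hPeq : P = fun w => petaL d_s m n (gradient L₂ w) := by
    funext w
    ext b
    show gradient (fun η' => L₂ (updEta w η')) (etaOf w) b = gradient L₂ w (Sum.inr b)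
    exact gradEta L₂ w (hL₂d w) b
  have hPd : Differentiable ℝ P := by
    rw [hPeq]
    exact (petaL d_s m n).differentiable.comp (hgradL₂.differentiable one_ne_zero)
  -- the key decomposition G = F - ι ∘ P
  have hGFP : G = fun w => F w - JetaL d_s m n (P w) := by
    rw [hF, hG]
    funext w
    show -gradient L₂ w = -gradient L₁ w - JetaL d_s m n (P w)
    ext z
    rw [PiLp.sub_apply, PiLp.neg_apply, PiLp.neg_apply]
    cases z with
    | inl p =>
        have h1 : gradient L₂ w (Sum.inl (p.1, p.2)) = gradient L₁ w (Sum.inl (p.1, p.2)) := by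
          rw [← gradBlk L₂ w p.1 (hL₂d w) p.2, ← gradBlk L₁ w p.1 (hL₁d w) p.2, hpart]
        have h2 : JetaL d_s m n (P w) (Sum.inl p) = 0 := rfl
        rw [h2, sub_zero]
        rw [show (p : Fin n × Fin d_s) = (p.1, p.2) from rfl] at *
        rw [h1]
    | inr b =>
        have h2 : JetaL d_s m n (P w) (Sum.inr b) = P w b := rfl
        have h3 : gradient L₁ w (Sum.inr b) = 0 := grad_L1_inr L_S hLS w b
        have h4 : gradient L₂ w (Sum.inr b) = P w b := (gradEta L₂ w (hL₂d w) b).symm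
        rw [h2, h3, h4, neg_zero, zero_sub]
  have hFrho : ∀ w, F (rhoL d_s m n w) = F w := by
    intro w
    rw [hF]
    show -gradient L₁ (rhoL d_s m n w) = -gradient L₁ w
    congr 1
    ext z
    cases z with
    | inl p =>
        rw [show (p : Fin n × Fin d_s) = (p.1, p.2) from rfl]
        rw [grad_L1_inl L_S hLS, grad_L1_inl L_S hLS]
        rfl
    | inr b =>
        rw [grad_L1_inr L_S hLS, grad_L1_inr L_S hLS]
  have hrho_w₀ : rhoL d_s m n (diagPt θ) = diagPt θ := by
    ext z
    cases z with
    | inl p => rfl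
    | inr b => rfl
  have hker : ∀ v : EuclideanSpace ℝ (Fin m),
      fderiv ℝ F (diagPt θ) (JetaL d_s m n v) = 0 := by
    intro v
    have hFcomp : F = F ∘ (rhoL d_s m n) := by funext w; exact (hFrho w).symm
    have h1 : fderiv ℝ F (diagPt θ) = (fderiv ℝ F (diagPt θ)).comp (rhoL d_s m n) := by
      conv_lhs => rw [hFcomp]
      rw [fderiv_comp _ (by rw [hrho_w₀]; exact hFd _) (rhoL d_s m n).differentiableAt,
        ContinuousLinearMap.fderiv, hrho_w₀]
    rw [h1, ContinuousLinearMap.comp_apply]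
    have h2 : rhoL d_s m n (JetaL d_s m n v) = 0 := by
      ext z
      cases z with
      | inl p => rfl
      | inr b => rfl
    rw [h2, map_zero]
  have hFw₀ : F (diagPt θ)
      = -((1 / (n:ℝ)) • ∑ i : Fin n, embedBlk i (gradient L_S θ) : Wsp d_s m n) := by
    rw [hF]
    show -gradient L₁ (diagPt θ) = _
    congr 1
    ext z
    cases z with
    | inl p =>
        rw [show (p : Fin n × Fin d_s) = (p.1, p.2) from rfl]
        rw [grad_L1_inl L_S hLS]
        have hblk : blk (diagPt θ : Wsp d_s m n) p.1 = θ := rfl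
        rw [hblk, PiLp.smul_apply, Wsp_sum_apply]
        have he : ∀ i : Fin n, (embedBlk i (gradient L_S θ) : Wsp d_s m n) (Sum.inl (p.1, p.2))
            = if p.1 = i then gradient L_S θ p.2 else 0 := fun i => rfl
        simp only [he]
        rw [Finset.sum_ite_eq Finset.univ p.1 (fun _ => gradient L_S θ p.2)]
        simp
    | inr b =>
        rw [grad_L1_inr L_S hLS, PiLp.smul_apply, Wsp_sum_apply]
        have he : ∀ i : Fin n, (embedBlk i (gradient L_S θ) : Wsp d_s m n) (Sum.inr b) = 0 :=
          fun i => rfl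
        simp only [he]
        simp
  have hfderivG : fderiv ℝ G (diagPt θ)
      = fderiv ℝ F (diagPt θ) - (JetaL d_s m n).comp (fderiv ℝ P (diagPt θ)) := by
    have h1 : fderiv ℝ (fun w => JetaL d_s m n (P w)) (diagPt θ)
        = (JetaL d_s m n).comp (fderiv ℝ P (diagPt θ)) :=
      ((JetaL d_s m n).hasFDerivAt.comp _ (hPd _).hasFDerivAt).fderiv
    have hJP : DifferentiableAt ℝ (fun w : Wsp d_s m n => JetaL d_s m n (P w)) (diagPt θ) := by
      exact ((JetaL d_s m n).differentiable.comp hPd) _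
    rw [hGFP, fderiv_fun_sub (hFd _) hJP, h1]
  have key : fderiv ℝ G (diagPt θ) (F (diagPt θ)) - fderiv ℝ F (diagPt θ) (G (diagPt θ))
      = -(JetaL d_s m n ((fderiv ℝ P (diagPt θ)) (F (diagPt θ)))) := by
    have hGw : G (diagPt θ) = F (diagPt θ) - JetaL d_s m n (P (diagPt θ)) := by rw [hGFP]
    rw [hfderivG, hGw, ContinuousLinearMap.sub_apply, ContinuousLinearMap.comp_apply,
      map_sub, hker]
    abel
  constructor
  · intro i a
    rw [key, PiLp.neg_apply]
    show -(0:ℝ) = 0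
    simp
  · funext bc
    have hy : (fderiv ℝ P (diagPt θ)) (F (diagPt θ))
        = -((1 / (n:ℝ)) • ∑ i : Fin n,
            (fderiv ℝ P (diagPt θ)) (embedBlk i (gradient L_S θ))) := by
      rw [hFw₀, map_neg, map_smul, map_sum]
    rw [key, PiLp.neg_apply]
    show -((fderiv ℝ P (diagPt θ)) (F (diagPt θ)) bc) = _
    rw [hy, PiLp.neg_apply, neg_neg]
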